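/- arXiv:2408.07572 — 3 statements merged into one kernel-verified Lean document; each statement's English description precedes it below -/
import Mathlib

section
/- Let (X,d) be a metric space, let E ⊆ X be Borel, and let S ⊆ E be measurable with S^α ⊆ E for some α > 0, where S^α is the set of points at distance less than α from S. Let μ and ν be finite Borel measures on X with μ(S) = μ(E), ν(S) = ν(E), and d_LP(μ,ν) < α. Then d_LP(μ|_E, ν|_E) ≤ d_LP(μ,ν), where μ|_E denotes the restriction of μ to E, i.e. μ|_E(Q) = μ(E ∩ Q) for every Borel set Q. -/
set_option autoImplicit false

open MeasureTheory Metric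

/-- Let `E` be a Borel subset of a metric space `X` and `S ⊆ E` measurable
with `S^α ⊆ E` for some `α > 0` (`S^α` the set of points at distance less than `α` from `S`,
i.e. the thickening of `S`).  If `μ, ν` are finite Borel measures on `X` with
`μ(S) = μ(E)`, `ν(S) = ν(E)` and `d_LP(μ,ν) < α`, then
`d_LP(μ|_E, ν|_E) ≤ d_LP(μ,ν)`. -/
theorem levyProkhorovDist_restrict_le
    {X : Type*} [MetricSpace X] [MeasurableSpace X] [BorelSpace X]
    (E S : Set X) (hE : MeasurableSet E) (hS : MeasurableSet S) (hSE : S ⊆ E)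
    (α : ℝ) (hα : 0 < α) (hthick : Metric.thickening α S ⊆ E)
    (μ ν : Measure X) [IsFiniteMeasure μ] [IsFiniteMeasure ν]
    (hμ : μ S = μ E) (hν : ν S = ν E)
    (hd : levyProkhorovDist μ ν < α) :
    levyProkhorovDist (μ.restrict E) (ν.restrict E) ≤ levyProkhorovDist μ ν := by
  have hμdiff : μ (E \ S) = 0 := by
    rw [measure_diff hSE hS.nullMeasurableSet (measure_ne_top μ S), hμ, tsub_self]
  have hνdiff : ν (E \ S) = 0 := by
    rw [measure_diff hSE hS.nullMeasurableSet (measure_ne_top ν S), hν, tsub_self]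
  have Dne : levyProkhorovEDist μ ν ≠ ⊤ := levyProkhorovEDist_ne_top μ ν
  have hDα : levyProkhorovEDist μ ν < ENNReal.ofReal α :=
    (ENNReal.lt_ofReal_iff_toReal_lt Dne).mpr hd
  suffices h : levyProkhorovEDist (μ.restrict E) (ν.restrict E) ≤ levyProkhorovEDist μ ν from
    ENNReal.toReal_mono Dne h
  apply levyProkhorovEDist_le_of_forall
  intro ε B hε hεtop hB
  set ε' := min ε (ENNReal.ofReal α) with hε'def
  have hDε' : levyProkhorovEDist μ ν < ε' := lt_min hε hDα
  have hε'top : ε' ≠ ⊤ := ne_top_of_le_ne_top hεtop.ne (min_le_left _ _)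
  have hε'α : ε'.toReal ≤ α := by
    calc ε'.toReal ≤ (ENNReal.ofReal α).toReal :=
          ENNReal.toReal_mono ENNReal.ofReal_ne_top (min_le_right _ _)
      _ = α := ENNReal.toReal_ofReal hα.le
  have hsub : thickening ε'.toReal (B ∩ S) ⊆ thickening ε'.toReal B ∩ E := by
    intro x hx
    constructor
    · exact thickening_subset_of_subset _ Set.inter_subset_left hx
    · exact hthick <| thickening_mono hε'α _
        (thickening_subset_of_subset _ Set.inter_subset_right hx)
  have key : ∀ (κ ρ : Measure X), κ (E \ S) = 0 →
      (∀ B', MeasurableSet B' → κ B' ≤ ρ (thickening ε'.toReal B') + ε') →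
      κ.restrict E B ≤ ρ.restrict E (thickening ε.toReal B) + ε := by
    intro κ ρ hκ hκρ
    apply meas_le_of_le_of_forall_le_meas_thickening_add _ _ (min_le_left ε (ENNReal.ofReal α))
    rw [Measure.restrict_apply hB, Measure.restrict_apply isOpen_thickening.measurableSet]
    calc κ (B ∩ E) ≤ κ ((B ∩ S) ∪ (E \ S)) := by
          refine measure_mono fun x hx => ?_
          by_cases hxS : x ∈ S
          · exact Or.inl ⟨hx.1, hxS⟩
          · exact Or.inr ⟨hx.2, hxS⟩
      _ ≤ κ (B ∩ S) + κ (E \ S) := measure_union_le _ _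
      _ = κ (B ∩ S) := by rw [hκ, add_zero]
      _ ≤ ρ (thickening ε'.toReal (B ∩ S)) + ε' := hκρ _ (hB.inter hS)
      _ ≤ ρ (thickening ε'.toReal B ∩ E) + ε' := add_le_add_left (measure_mono hsub) ε'
  refine ⟨key μ ν hμdiff fun B' hB' => ?_, key ν μ hνdiff fun B' hB' => ?_⟩
  · exact left_measure_le_of_levyProkhorovEDist_lt hDε' hB'
  · exact right_measure_le_of_levyProkhorovEDist_lt hDε' hB'
end

section
/- Let (Ω,ℙ) be a probability space, k ≥ 1 an integer and δ > 0. Let f₁,…,f_k : Ω → [−1,1] be measurable and let μ = law of the random vector (f₁,…,f_k) ∈ 𝒫(ℝ^k). Suppose d_LP(μ, N_k) < δ, where N_k is the set of probability measures on ℝ^k supported on the standard basis vectors {e₁,…,e_k}. Then there exists a measurable partition {P₁,…,P_k} of Ω such that ‖f_i − 1_{P_i}‖_1 ≤ (k³ + 3k² + 5k + 1)δ for every i ∈ {1,…,k}. -/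
set_option autoImplicit false

open MeasureTheory Set
open scoped ENNReal

noncomputable section

/-- `ℝ^k` with the Euclidean metric. -/
abbrev RE (k : ℕ) : Type := EuclideanSpace ℝ (Fin k)

/-- `N_k`: the set of Borel probability measures on `ℝ^k` supported on the standard
basis vectors `e₁, …, e_k`. -/
def Nk (k : ℕ) : Set (Measure (RE k)) :=
  {ν | IsProbabilityMeasure ν ∧
    ν {y : RE k | ∀ i : Fin k, y ≠ EuclideanSpace.single i 1} = 0}

lemma abs_coord_le_norm {k : ℕ} (x : RE k) (i : Fin k) : |x i| ≤ ‖x‖ := by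
  have h := abs_real_inner_le_norm (EuclideanSpace.single i (1:ℝ)) x
  simpa [EuclideanSpace.inner_single_left, EuclideanSpace.norm_single] using h

/-- If `f₁, …, f_k` are measurable `[-1,1]`-valued functions on a
probability space whose joint law `μ` on `ℝ^k` is at Lévy–Prokhorov distance less than
`δ` from `N_k`, then there is a measurable partition `{P₁, …, P_k}` of `Ω` with
`‖f_i − 1_{P_i}‖₁ ≤ (k³ + 3k² + 5k + 1)δ` for every `i`. -/
theorem exists_partition_of_levyProkhorov_close_to_basis
    {Ω : Type*} [MeasurableSpace Ω] (ℙ : Measure Ω) [IsProbabilityMeasure ℙ]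
    (k : ℕ) (hk : 1 ≤ k) (δ : ℝ) (hδ : 0 < δ)
    (f : Fin k → Ω → ℝ) (hf : ∀ i, Measurable (f i))
    (hf1 : ∀ i x, f i x ∈ Icc (-1 : ℝ) 1)
    (μ : Measure (RE k))
    (hμ : μ = ℙ.map (fun ω => (WithLp.equiv 2 (Fin k → ℝ)).symm fun i => f i ω))
    (hclose : (⨅ ν ∈ Nk k, levyProkhorovEDist μ ν) < ENNReal.ofReal δ) :
    ∃ P : Fin k → Set Ω, (∀ i, MeasurableSet (P i)) ∧
      Pairwise (Function.onFun Disjoint P) ∧ (⋃ i, P i) = univ ∧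
      ∀ i, ∫ ω, |f i ω - (P i).indicator (fun _ => (1 : ℝ)) ω| ∂ℙ ≤
        ((k : ℝ) ^ 3 + 3 * (k : ℝ) ^ 2 + 5 * (k : ℝ) + 1) * δ := by
  classical
  -- extract a close measure ν ∈ Nk k
  obtain ⟨ν, hν⟩ := iInf_lt_iff.mp hclose
  obtain ⟨hνNk, hνlt⟩ := iInf_lt_iff.mp hν
  set g : Ω → RE k := fun ω => (WithLp.equiv 2 (Fin k → ℝ)).symm fun i => f i ω with hgdef
  have hg : Measurable g :=
    ((PiLp.continuousLinearEquiv 2 ℝ (fun _ : Fin k => ℝ)).symm.continuous.measurable).comp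
      (measurable_pi_lambda _ hf)
  set e : Fin k → RE k := fun i => EuclideanSpace.single i (1:ℝ) with hedef
  set U : Set (RE k) := (⋃ i, Metric.ball (e i) (2*δ))ᶜ with hUdef
  have hUmeas : MeasurableSet U :=
    (MeasurableSet.iUnion fun i => Metric.isOpen_ball.measurableSet).compl
  -- ν gives no mass to the thickening of U
  have hthick : ν (Metric.thickening ((ENNReal.ofReal δ).toReal) U) = 0 := by
    have hsub : Metric.thickening ((ENNReal.ofReal δ).toReal) U ⊆
        {y : RE k | ∀ i : Fin k, y ≠ EuclideanSpace.single i 1} := by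
      intro y hy i hyi
      rw [ENNReal.toReal_ofReal hδ.le] at hy
      rw [Metric.mem_thickening_iff] at hy
      obtain ⟨z, hzU, hdz⟩ := hy
      have hz : z ∉ Metric.ball (e i) (2*δ) := fun hz => hzU (mem_iUnion.mpr ⟨i, hz⟩)
      apply hz
      rw [Metric.mem_ball]
      have : dist z y < δ := by rwa [dist_comm]
      have : dist z (e i) < δ := by rwa [hyi] at this
      linarith
    exact le_antisymm (le_trans (measure_mono hsub) (le_of_eq hνNk.2)) (zero_le)
  have hkey : μ U ≤ ENNReal.ofReal δ := by
    have h := left_measure_le_of_levyProkhorovEDist_lt hνlt hUmeas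
    rwa [hthick, zero_add] at h
  have hL : ℙ (g ⁻¹' U) ≤ ENNReal.ofReal δ := by
    rwa [hμ, Measure.map_apply hg hUmeas] at hkey
  -- the partition
  set C : Fin k → Set Ω := fun i => g ⁻¹' (Metric.ball (e i) (2*δ)) ∪ g ⁻¹' U with hCdef
  have hCmeas : ∀ i, MeasurableSet (C i) :=
    fun i => (hg Metric.isOpen_ball.measurableSet).union (hg hUmeas)
  set P : Fin k → Set Ω := fun i => C i \ ⋃ j, ⋃ _ : j < i, C j with hPdef
  have hPmeas : ∀ i, MeasurableSet (P i) := fun i =>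
    (hCmeas i).diff (MeasurableSet.iUnion fun j => MeasurableSet.iUnion fun _ => hCmeas j)
  have hPsubC : ∀ i, P i ⊆ C i := fun i => diff_subset
  have hdisj : ∀ i j : Fin k, i < j → Disjoint (P i) (P j) := by
    intro i j hij
    rw [Set.disjoint_left]
    intro x hxi hxj
    exact hxj.2 (mem_iUnion.mpr ⟨i, mem_iUnion.mpr ⟨hij, hPsubC i hxi⟩⟩)
  have hUnion : (⋃ i, P i) = univ := by
    ext ω
    simp only [mem_univ, iff_true, mem_iUnion]
    have hex : ∃ i : Fin k, ω ∈ C i := by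
      by_cases hωU : g ω ∈ U
      · exact ⟨⟨0, hk⟩, Or.inr hωU⟩
      · obtain ⟨i, hi⟩ := mem_iUnion.mp (not_not.mp hωU)
        exact ⟨i, Or.inl hi⟩
    obtain ⟨i, hi⟩ := hex
    obtain ⟨i₀, hi₀mem, hi₀min⟩ := Finset.exists_min_image
      (Finset.univ.filter fun i => ω ∈ C i) id ⟨i, by simp [hi]⟩
    refine ⟨i₀, (Finset.mem_filter.mp hi₀mem).2, ?_⟩
    intro hmem
    obtain ⟨j, hj⟩ := mem_iUnion.mp hmem
    obtain ⟨hji, hωj⟩ := mem_iUnion.mp hj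
    have : i₀ ≤ j := hi₀min j (Finset.mem_filter.mpr ⟨Finset.mem_univ _, hωj⟩)
    exact absurd hji (not_lt.mpr this)
  refine ⟨P, hPmeas, ?_, hUnion, ?_⟩
  · intro i j hij
    rcases lt_or_gt_of_ne hij with h | h
    · exact hdisj i j h
    · exact (hdisj j i h).symm
  -- the integral bound
  intro i
  have hcoord : ∀ ω j, g ω j = f j ω := fun ω j => rfl
  -- pointwise bound
  have hpt : ∀ ω, |f i ω - (P i).indicator (fun _ => (1:ℝ)) ω| ≤
      2*δ + (g ⁻¹' U).indicator (fun _ => (2:ℝ)) ω := by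
    intro ω
    have hbd : |f i ω - (P i).indicator (fun _ => (1:ℝ)) ω| ≤ 2 := by
      have h1 := hf1 i ω
      have h2 : (P i).indicator (fun _ => (1:ℝ)) ω = 0 ∨
          (P i).indicator (fun _ => (1:ℝ)) ω = 1 := by
        by_cases hω : ω ∈ P i <;> simp [hω]
      rcases h2 with h2 | h2 <;> rw [h2] <;> rw [abs_le] <;>
        constructor <;> linarith [h1.1, h1.2]
    by_cases hωU : g ω ∈ U
    · rw [Set.indicator_of_mem (show ω ∈ g ⁻¹' U from hωU)]
      linarith
    · rw [Set.indicator_of_notMem (show ω ∉ g ⁻¹' U from hωU), add_zero]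
      obtain ⟨j₁, hj₁⟩ := mem_iUnion.mp (not_not.mp hωU)
      by_cases hP : ω ∈ P i
      · -- then g ω ∈ ball (e i) (2δ)
        have hball : g ω ∈ Metric.ball (e i) (2*δ) := by
          rcases hPsubC i hP with h | h
          · exact h
          · exact absurd h hωU
        rw [Set.indicator_of_mem hP]
        have h1 : |f i ω - 1| = |(g ω - e i) i| := by
          have : (e i) i = 1 := by simp [hedef]
          simp only [PiLp.sub_apply, hcoord, this]
        rw [h1]
        calc |(g ω - e i) i| ≤ ‖g ω - e i‖ := abs_coord_le_norm _ _
          _ ≤ 2*δ := le_of_lt (by rwa [← dist_eq_norm, ← Metric.mem_ball])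
      · -- there is j ≠ i with g ω ∈ ball (e j) (2δ)
        have hex : ∃ j : Fin k, j ≠ i ∧ g ω ∈ Metric.ball (e j) (2*δ) := by
          by_cases hji : j₁ = i
          · -- ω ∈ C i but ω ∉ P i, so ω ∈ C j for some j < i
            have hωCi : ω ∈ C i := Or.inl (hji ▸ hj₁)
            have : ω ∈ ⋃ j, ⋃ _ : j < i, C j := by
              by_contra hcon
              exact hP ⟨hωCi, hcon⟩
            obtain ⟨j, hj⟩ := mem_iUnion.mp this
            obtain ⟨hjlt, hωj⟩ := mem_iUnion.mp hj
            rcases hωj with h | h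
            · exact ⟨j, ne_of_lt hjlt, h⟩
            · exact absurd h hωU
          · exact ⟨j₁, hji, hj₁⟩
        obtain ⟨j, hjne, hball⟩ := hex
        rw [Set.indicator_of_notMem hP, sub_zero]
        have h1 : |f i ω| = |(g ω - e j) i| := by
          have : (e j) i = 0 := by
            simp [hedef, EuclideanSpace.single_apply, hjne, Ne.symm hjne]
          simp only [PiLp.sub_apply, hcoord, this, sub_zero]
        rw [h1]
        calc |(g ω - e j) i| ≤ ‖g ω - e j‖ := abs_coord_le_norm _ _
          _ ≤ 2*δ := le_of_lt (by rwa [← dist_eq_norm, ← Metric.mem_ball])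
  -- integrability
  have hmeasLHS : Measurable fun ω => |f i ω - (P i).indicator (fun _ => (1:ℝ)) ω| :=
    ((hf i).sub (measurable_const.indicator (hPmeas i))).abs
  have hint1 : Integrable (fun ω => |f i ω - (P i).indicator (fun _ => (1:ℝ)) ω|) ℙ := by
    refine (integrable_const (2:ℝ)).mono' hmeasLHS.aestronglyMeasurable ?_
    filter_upwards with ω
    rw [Real.norm_eq_abs, abs_abs]
    have h1 := hf1 i ω
    have h2 : (P i).indicator (fun _ => (1:ℝ)) ω = 0 ∨
        (P i).indicator (fun _ => (1:ℝ)) ω = 1 := by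
      by_cases hω : ω ∈ P i <;> simp [hω]
    rcases h2 with h2 | h2 <;> rw [h2] <;> rw [abs_le] <;>
      constructor <;> linarith [h1.1, h1.2]
  have hint2 : Integrable (fun ω => 2*δ + (g ⁻¹' U).indicator (fun _ => (2:ℝ)) ω) ℙ :=
    (integrable_const (2*δ)).add ((integrable_const (2:ℝ)).indicator (hg hUmeas))
  have hmono := integral_mono hint1 hint2 hpt
  have hcalc : ∫ ω, (2*δ + (g ⁻¹' U).indicator (fun _ => (2:ℝ)) ω) ∂ℙ =
      2*δ + (ℙ (g ⁻¹' U)).toReal * 2 := by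
    rw [integral_add (integrable_const _) ((integrable_const (2:ℝ)).indicator (hg hUmeas)),
      integral_const, integral_indicator_const _ (hg hUmeas)]
    simp [measure_univ, smul_eq_mul]
    rfl
  rw [hcalc] at hmono
  have hLtoReal : (ℙ (g ⁻¹' U)).toReal ≤ δ :=
    ENNReal.toReal_le_of_le_ofReal hδ.le hL
  have hk1 : (1:ℝ) ≤ (k:ℝ) := by exact_mod_cast hk
  calc ∫ ω, |f i ω - (P i).indicator (fun _ => (1:ℝ)) ω| ∂ℙ
      ≤ 2*δ + (ℙ (g ⁻¹' U)).toReal * 2 := hmono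
    _ ≤ 2*δ + δ*2 := by linarith
    _ ≤ ((k : ℝ) ^ 3 + 3 * (k : ℝ) ^ 2 + 5 * (k : ℝ) + 1) * δ := by
        have h4 : (4:ℝ) ≤ (k : ℝ) ^ 3 + 3 * (k : ℝ) ^ 2 + 5 * (k : ℝ) + 1 := by nlinarith
        nlinarith [mul_le_mul_of_nonneg_right h4 hδ.le]
end
end

section
/- The map G : 𝒫(ℝ) × [0,1] → ℝ defined by G(μ,p) = inf{x ∈ ℝ : μ((−∞,x]) ≥ p} (the generalized inverse distribution function of μ evaluated at p) is measurable, where 𝒫(ℝ) denotes the space of Borel probability measures on ℝ equipped with the Borel σ-algebra of the topology of weak convergence, and 𝒫(ℝ) × [0,1] carries the product σ-algebra. -/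
set_option autoImplicit false

open MeasureTheory Set
open scoped NNReal ENNReal

noncomputable section

/-- The space `𝒫(ℝ)` of Borel probability measures on `ℝ`, equipped with the Borel
σ-algebra of the topology of weak convergence. -/
instance : MeasurableSpace (ProbabilityMeasure ℝ) := borel (ProbabilityMeasure ℝ)

instance : BorelSpace (ProbabilityMeasure ℝ) := ⟨rfl⟩

open Filter Topology

/-- For a fixed closed set, the measure of the set is a measurable function of the
probability measure (in the Borel σ-algebra of the weak topology). -/
lemma measurable_measure_Iic_aux (x : ℝ) :
    Measurable (fun μ : ProbabilityMeasure ℝ => (μ : Measure ℝ) (Iic x)) := by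
  have hF : IsClosed (Iic x) := isClosed_Iic
  have hmeas : ∀ n : ℕ, Measurable (fun μ : ProbabilityMeasure ℝ =>
      ∫⁻ ω, (hF.apprSeq n ω : ℝ≥0∞) ∂(μ : Measure ℝ)) := by
    intro n
    have hrw : (fun μ : ProbabilityMeasure ℝ => ∫⁻ ω, (hF.apprSeq n ω : ℝ≥0∞) ∂(μ : Measure ℝ))
        = fun μ => ((μ.toFiniteMeasure.testAgainstNN (hF.apprSeq n) : ℝ≥0) : ℝ≥0∞) := by
      funext μ
      rw [FiniteMeasure.testAgainstNN_coe_eq]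
      rfl
    rw [hrw]
    exact (ENNReal.continuous_coe.comp ((FiniteMeasure.continuous_testAgainstNN_eval _).comp
      ProbabilityMeasure.toFiniteMeasure_continuous)).measurable
  apply ENNReal.measurable_of_tendsto hmeas
  rw [tendsto_pi_nhds]
  intro μ
  exact HasOuterApproxClosed.tendsto_lintegral_apprSeq hF (μ : Measure ℝ)

lemma measurable_realF (x : ℝ) :
    Measurable (fun μ : ProbabilityMeasure ℝ => ((μ (Iic x) : ℝ≥0) : ℝ)) := by
  have : (fun μ : ProbabilityMeasure ℝ => ((μ (Iic x) : ℝ≥0) : ℝ))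
      = fun μ : ProbabilityMeasure ℝ => ((μ : Measure ℝ) (Iic x)).toReal := by
    funext μ
    rw [ProbabilityMeasure.coeFn_def]
    rfl
  rw [this]
  exact ENNReal.measurable_toReal.comp (measurable_measure_Iic_aux x)

/-- Convenience: the real-valued CDF of a probability measure, at a point. -/
private lemma realF_tendsto_of_antitone (μ : ProbabilityMeasure ℝ) {s : ℕ → ℝ}
    (hm : Antitone fun n => Iic (s n)) (T : Set ℝ) (hT : (⋂ n, Iic (s n)) = T) :
    Tendsto (fun n => ((μ (Iic (s n)) : ℝ≥0) : ℝ)) atTop (𝓝 ((μ T : ℝ≥0) : ℝ)) := by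
  have h1 : Tendsto (fun n => (μ : Measure ℝ) (Iic (s n))) atTop
      (𝓝 ((μ : Measure ℝ) (⋂ n, Iic (s n)))) := by
    refine tendsto_measure_iInter_atTop (fun n => measurableSet_Iic.nullMeasurableSet) hm
      ⟨0, measure_ne_top _ _⟩
  rw [hT] at h1
  have h2 : Tendsto (fun n => ((μ : Measure ℝ) (Iic (s n))).toReal) atTop
      (𝓝 (((μ : Measure ℝ) T).toReal)) :=
    (ENNReal.tendsto_toReal (measure_ne_top _ _)).comp h1
  convert h2 using 2
  all_goals rfl

/-- The key pointwise identity: the generalized inverse CDF equals the `EReal.toReal` of a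
countable infimum over rationals. -/
lemma key_identity (μ : ProbabilityMeasure ℝ) (p : ℝ) (hp : 0 ≤ p) :
    sInf {x : ℝ | p ≤ ((μ (Iic x) : ℝ≥0) : ℝ)} =
    (⨅ r : ℚ, if p ≤ ((μ (Iic (r : ℝ)) : ℝ≥0) : ℝ) then ((r : ℝ) : EReal) else ⊤).toReal := by
  set F : ℝ → ℝ := fun x => ((μ (Iic x) : ℝ≥0) : ℝ) with hF
  set S : Set ℝ := {x : ℝ | p ≤ F x} with hSdef
  have Fmono : Monotone F := fun x y hxy => by
    exact_mod_cast μ.apply_mono (Iic_subset_Iic.2 hxy)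
  have Supper : ∀ {x y : ℝ}, x ∈ S → x ≤ y → y ∈ S := fun hx hxy =>
    le_trans hx (Fmono hxy)
  rcases eq_or_lt_of_le hp with hp0 | hp0
  · -- p = 0 : S = univ, both sides are 0
    have hSuniv : S = univ := eq_univ_of_forall fun x => by
      simp only [hSdef, mem_setOf_eq, ← hp0]; positivity
    have hiInf : (⨅ r : ℚ, if p ≤ F (r : ℝ) then ((r : ℝ) : EReal) else ⊤) = ⊥ := by
      have hcond : ∀ r : ℚ, p ≤ F (r : ℝ) := fun r => by
        rw [← hp0]; positivity
      simp only [hcond, if_true]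
      rw [iInf_eq_bot]
      intro b hb
      induction b with
      | bot => exact absurd hb (lt_irrefl _)
      | coe y =>
          obtain ⟨r, hr⟩ := exists_rat_lt y
          exact ⟨r, by exact_mod_cast hr⟩
      | top => exact ⟨0, by simp⟩
    rw [hiInf, EReal.toReal_bot, hSuniv]
    exact Real.sInf_of_not_bddBelow fun ⟨c, hc⟩ => by
      obtain ⟨r, hr⟩ := exists_rat_lt c
      exact absurd (hc (mem_univ (r : ℝ))) (not_le.2 (by exact_mod_cast hr))
  · -- p > 0
    have hbdd : BddBelow S := by
      by_contra hnb
      have hmem : ∀ n : ℕ, (-(n : ℝ)) ∈ S := by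
        intro n
        obtain ⟨y, hyS, hy⟩ := not_bddBelow_iff.1 hnb (-(n : ℝ))
        exact Supper hyS hy.le
      have hanti : Antitone fun n : ℕ => Iic (-(n : ℝ)) := fun n m hnm =>
        Iic_subset_Iic.2 (by exact_mod_cast neg_le_neg (by exact_mod_cast hnm))
      have hInter : (⋂ n : ℕ, Iic (-(n : ℝ))) = (∅ : Set ℝ) := by
        ext x
        simp only [mem_iInter, mem_Iic, mem_empty_iff_false, iff_false, not_forall, not_le]
        obtain ⟨n, hn⟩ := exists_nat_gt (-x)
        exact ⟨n, by linarith⟩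
      have htend := realF_tendsto_of_antitone μ hanti ∅ hInter
      have h0 : ((μ (∅ : Set ℝ) : ℝ≥0) : ℝ) = 0 := by simp
      rw [h0] at htend
      have := ge_of_tendsto' htend fun n => hmem n
      linarith
    rcases eq_empty_or_nonempty S with hSe | hSne
    · -- S empty
      have hcond : ∀ r : ℚ, ¬ p ≤ F (r : ℝ) := by
        intro r hr
        have hmem : (r : ℝ) ∈ S := hr
        rw [hSe] at hmem
        exact hmem
      have : (⨅ r : ℚ, if p ≤ F (r : ℝ) then ((r : ℝ) : EReal) else ⊤) = ⊤ := by
        simp only [hcond, if_false, iInf_top]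
      rw [this, EReal.toReal_top, hSe, Real.sInf_empty]
    · set a : ℝ := sInf S with ha
      have haS : a ∈ S := by
        have hmem : ∀ n : ℕ, (a + 1 / ((n : ℝ) + 1)) ∈ S := by
          intro n
          have hlt : a < a + 1 / ((n : ℝ) + 1) := by
            have : (0 : ℝ) < 1 / ((n : ℝ) + 1) := by positivity
            linarith
          obtain ⟨y, hyS, hy⟩ := exists_lt_of_csInf_lt hSne hlt
          exact Supper hyS hy.le
        have hanti : Antitone fun n : ℕ => Iic (a + 1 / ((n : ℝ) + 1)) := by
          intro n m hnm
          apply Iic_subset_Iic.2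
          have h1 : (0:ℝ) < (n : ℝ) + 1 := by positivity
          have h2 : (n : ℝ) + 1 ≤ (m : ℝ) + 1 := by exact_mod_cast by omega
          have := one_div_le_one_div_of_le h1 h2
          linarith
        have hInter : (⋂ n : ℕ, Iic (a + 1 / ((n : ℝ) + 1))) = Iic a := by
          ext x
          simp only [mem_iInter, mem_Iic]
          constructor
          · intro h
            by_contra hxa
            push_neg at hxa
            obtain ⟨n, hn⟩ := exists_nat_one_div_lt (sub_pos.2 hxa)
            have := h n
            linarith
          · intro h n
            have : (0 : ℝ) < 1 / ((n : ℝ) + 1) := by positivity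
            linarith
        have htend := realF_tendsto_of_antitone μ hanti (Iic a) hInter
        exact ge_of_tendsto' htend fun n => hmem n
      have hSIci : S = Ici a := by
        apply Subset.antisymm
        · exact fun x hx => csInf_le hbdd hx
        · exact fun x hx => Supper haS hx
      have hcond : ∀ r : ℚ, (p ≤ F (r : ℝ)) ↔ a ≤ (r : ℝ) := by
        intro r
        constructor
        · intro h; exact (hSIci ▸ (h : (r : ℝ) ∈ S) : (r : ℝ) ∈ Ici a)
        · intro h; exact (hSIci ▸ (h : (r : ℝ) ∈ Ici a) : (r : ℝ) ∈ S)
      have hiInf : (⨅ r : ℚ, if p ≤ F (r : ℝ) then ((r : ℝ) : EReal) else ⊤)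
          = ((a : ℝ) : EReal) := by
        apply le_antisymm
        · by_contra hlt
          push_neg at hlt
          obtain ⟨r, h1, h2⟩ := EReal.exists_rat_btwn_of_lt hlt
          have har : a ≤ (r : ℝ) := by exact_mod_cast h1.le
          have : (⨅ r : ℚ, if p ≤ F (r : ℝ) then ((r : ℝ) : EReal) else ⊤)
              ≤ ((r : ℝ) : EReal) := by
            refine le_trans (iInf_le _ r) ?_
            rw [if_pos ((hcond r).2 har)]
          exact absurd (this.trans_lt h2) (lt_irrefl _)
        · apply le_iInf
          intro r
          by_cases h : p ≤ F (r : ℝ)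
          · rw [if_pos h]
            exact_mod_cast (hcond r).1 h
          · rw [if_neg h]; exact le_top
      rw [hiInf, EReal.toReal_coe]

/-- The generalized inverse distribution function map
`G : 𝒫(ℝ) × [0,1] → ℝ`, `G(μ,p) = inf {x : μ((−∞,x]) ≥ p}`, is measurable, where
`𝒫(ℝ)` carries the Borel σ-algebra of the topology of weak convergence and
`𝒫(ℝ) × [0,1]` the product σ-algebra. -/
theorem measurable_generalizedInverseCDF :
    Measurable (fun q : ProbabilityMeasure ℝ × Set.Icc (0 : ℝ) 1 =>
      sInf {x : ℝ | (q.2 : ℝ) ≤ (q.1 (Set.Iic x) : ℝ)}) := by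
  have hrw : (fun q : ProbabilityMeasure ℝ × Set.Icc (0 : ℝ) 1 =>
      sInf {x : ℝ | (q.2 : ℝ) ≤ (q.1 (Set.Iic x) : ℝ)})
      = fun q => (⨅ r : ℚ,
          if (q.2 : ℝ) ≤ ((q.1 (Iic (r : ℝ)) : ℝ≥0) : ℝ) then ((r : ℝ) : EReal) else ⊤).toReal := by
    funext q
    exact key_identity q.1 (q.2 : ℝ) q.2.2.1
  rw [hrw]
  apply Measurable.ereal_toReal
  apply Measurable.iInf
  intro r
  apply Measurable.ite _ measurable_const measurable_const
  exact measurableSet_le (continuous_subtype_val.comp continuous_snd).measurable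
    ((measurable_realF (r : ℝ)).comp measurable_fst)

end
end
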